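/- In the bivariate Gaussian selection model, copula stability is equivalent to correlation stability: suppose (Y₀₀, Y₁₀, η) is jointly Gaussian with Y_{t0} ~ N(0, σ_t²), η ~ N(0,1), Corr(Y_{t0}, η) = ρ_t, and D = 1{η ≥ 0}. Then the joint subdistribution P(Y_{t0} ≤ y, D = 0) = Φ₂(y/σ_t, 0; ρ_t), and the horizontal subcopula C_{Y_{t0},D}(u, 1/2) = Φ₂(Φ⁻¹(u), 0; ρ_t); hence C_{Y₀₀,D}(u, 1/2) = C_{Y₁₀,D}(u, 1/2) for all u ∈ [0,1] if and only if ρ₀ = ρ₁. -/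

import Mathlib

open Set MeasureTheory

/-- Standard bivariate normal density with correlation `ρ`. -/
noncomputable def binormDensity (ρ x y : ℝ) : ℝ :=
  (2 * Real.pi * Real.sqrt (1 - ρ ^ 2))⁻¹ *
    Real.exp (-(x ^ 2 - 2 * ρ * x * y + y ^ 2) / (2 * (1 - ρ ^ 2)))

/-- Standard bivariate normal cdf `Φ₂(a, b; ρ)`. -/
noncomputable def Phi2 (a b ρ : ℝ) : ℝ :=
  ∫ x in Iic a, ∫ y in Iic b, binormDensity ρ x y

/-- Standard normal cdf `Φ`. -/
noncomputable def stdNormCdf (x : ℝ) : ℝ :=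
  ∫ t in Iic x, Real.exp (-(t ^ 2) / 2) / Real.sqrt (2 * Real.pi)

/-- Standard normal quantile `Φ⁻¹`. -/
noncomputable def stdNormQuantile (u : ℝ) : ℝ := sInf {x : ℝ | u ≤ stdNormCdf x}

/-! ### Auxiliary facts about the standard normal density and cdf -/

noncomputable def stdPhi (x : ℝ) : ℝ := Real.exp (-(x ^ 2) / 2) / Real.sqrt (2 * Real.pi)

lemma stdPhi_pos (x : ℝ) : 0 < stdPhi x := by
  apply div_pos (Real.exp_pos _)
  exact Real.sqrt_pos.2 (by positivity)

lemma stdPhi_cont : Continuous stdPhi := by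
  unfold stdPhi; fun_prop

lemma gcs_integrable_exp_neg_sq_half : Integrable (fun x : ℝ => Real.exp (-(x ^ 2) / 2)) := by
  have : (fun x : ℝ => Real.exp (-(x ^ 2) / 2)) = fun x => Real.exp (-(1/2) * x ^ 2) := by
    funext x; ring_nf
  rw [this]; exact integrable_exp_neg_mul_sq (by norm_num)

lemma gcs_integrable_stdPhi : Integrable stdPhi :=
  gcs_integrable_exp_neg_sq_half.div_const _

lemma gcs_integral_exp_neg_sq_half :
    ∫ x : ℝ, Real.exp (-(x ^ 2) / 2) = Real.sqrt (2 * Real.pi) := by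
  have : (fun x : ℝ => Real.exp (-(x ^ 2) / 2)) = fun x => Real.exp (-(1/2) * x ^ 2) := by
    funext x; ring_nf
  rw [this, integral_gaussian]
  rw [show Real.pi / (1/2) = 2 * Real.pi by ring]

lemma gcs_integral_stdPhi : ∫ x : ℝ, stdPhi x = 1 := by
  unfold stdPhi
  rw [integral_div, gcs_integral_exp_neg_sq_half, div_self]
  positivity

lemma stdNormCdf_eq (x : ℝ) : stdNormCdf x = ∫ t in Iic x, stdPhi t := rfl

lemma stdNormCdf_sub (a b : ℝ) :
    stdNormCdf b - stdNormCdf a = ∫ t in a..b, stdPhi t := by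
  rw [stdNormCdf_eq, stdNormCdf_eq]
  exact (intervalIntegral.integral_Iic_sub_Iic (f := stdPhi) (μ := volume) (a := a) (b := b)
    gcs_integrable_stdPhi.integrableOn gcs_integrable_stdPhi.integrableOn)

lemma stdNormCdf_strictMono : StrictMono stdNormCdf := by
  intro a b hab
  have h := stdNormCdf_sub a b
  have hpos : 0 < ∫ t in a..b, stdPhi t :=
    intervalIntegral.intervalIntegral_pos_of_pos
      (gcs_integrable_stdPhi.intervalIntegrable) stdPhi_pos hab
  linarith

lemma stdNormCdf_continuous : Continuous stdNormCdf := by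
  have : stdNormCdf = fun b => stdNormCdf 0 + ∫ t in (0:ℝ)..b, stdPhi t := by
    funext b; have := stdNormCdf_sub 0 b; linarith
  rw [this]
  exact continuous_const.add (intervalIntegral.continuous_primitive
    (fun a b => gcs_integrable_stdPhi.intervalIntegrable) 0)

lemma stdNormCdf_nonneg (x : ℝ) : 0 ≤ stdNormCdf x :=
  setIntegral_nonneg measurableSet_Iic (fun t _ => (stdPhi_pos t).le)

lemma stdNormCdf_le_one (x : ℝ) : stdNormCdf x ≤ 1 := by
  rw [stdNormCdf_eq, ← gcs_integral_stdPhi]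
  exact setIntegral_le_integral gcs_integrable_stdPhi
    (Filter.Eventually.of_forall fun t => (stdPhi_pos t).le)

lemma stdNormCdf_pos (x : ℝ) : 0 < stdNormCdf x := by
  have h := stdNormCdf_sub (x - 1) x
  have hpos : 0 < ∫ t in (x-1)..x, stdPhi t :=
    intervalIntegral.intervalIntegral_pos_of_pos
      (gcs_integrable_stdPhi.intervalIntegrable) stdPhi_pos (by linarith)
  have := stdNormCdf_nonneg (x - 1)
  linarith

lemma stdNormCdf_lt_one (x : ℝ) : stdNormCdf x < 1 := by
  have h := stdNormCdf_sub x (x + 1)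
  have hpos : 0 < ∫ t in x..(x+1), stdPhi t :=
    intervalIntegral.intervalIntegral_pos_of_pos
      (gcs_integrable_stdPhi.intervalIntegrable) stdPhi_pos (by linarith)
  have := stdNormCdf_le_one (x + 1)
  linarith

lemma stdNormQuantile_cdf (a : ℝ) : stdNormQuantile (stdNormCdf a) = a := by
  unfold stdNormQuantile
  have : {x : ℝ | stdNormCdf a ≤ stdNormCdf x} = Ici a := by
    ext x; simp [stdNormCdf_strictMono.le_iff_le]
  rw [this, csInf_Ici]

/-! ### Substitution lemmas for Iic integrals -/

lemma gcs_integral_Iic_comp_sub (g : ℝ → ℝ) (b c : ℝ) :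
    ∫ y in Iic b, g (y - c) = ∫ y in Iic (b - c), g y := by
  rw [← integral_indicator measurableSet_Iic, ← integral_indicator measurableSet_Iic,
    ← integral_sub_right_eq_self (fun y => (Iic (b-c)).indicator g y) c]
  congr 1; funext y
  by_cases h : y ≤ b
  · simp [indicator_apply, mem_Iic, h, sub_le_sub_iff_right]
  · simp [indicator_apply, mem_Iic, h, sub_le_sub_iff_right]

lemma gcs_integral_Iic_comp_div (g : ℝ → ℝ) (b s : ℝ) (hs : 0 < s) :
    ∫ y in Iic b, g (y / s) = s * ∫ y in Iic (b / s), g y := by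
  rw [← integral_indicator measurableSet_Iic, ← integral_indicator measurableSet_Iic]
  have : ∀ y : ℝ, (Iic b).indicator (fun y => g (y / s)) y
      = (Iic (b / s)).indicator g (y / s) := by
    intro y
    by_cases h : y ≤ b
    · have h2 : y / s ≤ b / s := by gcongr
      simp [indicator_apply, mem_Iic, h, h2]
    · have h2 : ¬ (y / s ≤ b / s) := fun hh => h (by
        have := (div_le_div_iff_of_pos_right hs).1 hh; linarith)
      simp [indicator_apply, mem_Iic, h, h2]
  simp_rw [this]
  rw [MeasureTheory.Measure.integral_comp_div (fun y => (Iic (b/s)).indicator g y) s,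
    abs_of_pos hs, smul_eq_mul]

lemma gcs_integral_Iic_gauss (b c s : ℝ) (hs : 0 < s) :
    ∫ y in Iic b, Real.exp (-((y - c) ^ 2) / (2 * s ^ 2))
      = s * Real.sqrt (2 * Real.pi) * stdNormCdf ((b - c) / s) := by
  have h1 : ∀ y : ℝ, Real.exp (-((y - c) ^ 2) / (2 * s ^ 2))
      = (fun t => Real.exp (-(t ^ 2) / 2)) ((y - c) / s) := by
    intro y; simp only []
    congr 1
    rw [div_pow, neg_div, neg_div, div_div, mul_comm (s^2) 2]
  simp_rw [h1]
  rw [show (fun y => (fun t => Real.exp (-(t ^ 2) / 2)) ((y - c) / s))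
        = (fun y => (fun u => Real.exp (-((u / s) ^ 2) / 2)) (y - c)) from rfl]
  rw [gcs_integral_Iic_comp_sub (fun u => Real.exp (-((u / s) ^ 2) / 2)) b c]
  rw [gcs_integral_Iic_comp_div (fun t => Real.exp (-(t ^ 2) / 2)) (b - c) s hs]
  rw [stdNormCdf_eq]
  have : ∫ t in Iic ((b - c) / s), stdPhi t
      = (∫ t in Iic ((b - c) / s), Real.exp (-(t ^ 2) / 2)) / Real.sqrt (2 * Real.pi) := by
    unfold stdPhi; rw [integral_div]
  rw [this]
  have h2 : Real.sqrt (2 * Real.pi) ≠ 0 := by positivity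
  field_simp

/-! ### The inner integral of the bivariate density -/

lemma gcs_one_sub_sq_pos {ρ : ℝ} (hρ : ρ ∈ Ioo (-1:ℝ) 1) : 0 < 1 - ρ ^ 2 := by
  obtain ⟨h1, h2⟩ := hρ; nlinarith

lemma gcs_sqrt_one_sub_sq_pos {ρ : ℝ} (hρ : ρ ∈ Ioo (-1:ℝ) 1) :
    0 < Real.sqrt (1 - ρ ^ 2) :=
  Real.sqrt_pos.2 (gcs_one_sub_sq_pos hρ)

lemma gcs_binorm_inner {ρ : ℝ} (hρ : ρ ∈ Ioo (-1:ℝ) 1) (x b : ℝ) :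
    ∫ y in Iic b, binormDensity ρ x y
      = stdPhi x * stdNormCdf ((b - ρ * x) / Real.sqrt (1 - ρ ^ 2)) := by
  set s := Real.sqrt (1 - ρ ^ 2) with hs_def
  have hs : 0 < s := gcs_sqrt_one_sub_sq_pos hρ
  have hs2 : s ^ 2 = 1 - ρ ^ 2 := Real.sq_sqrt (gcs_one_sub_sq_pos hρ).le
  have hpt : ∀ y : ℝ, binormDensity ρ x y
      = ((2 * Real.pi * s)⁻¹ * Real.exp (-(x ^ 2) / 2)) *
        Real.exp (-((y - ρ * x) ^ 2) / (2 * s ^ 2)) := by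
    intro y
    have he : Real.exp (-(x ^ 2 - 2 * ρ * x * y + y ^ 2) / (2 * (1 - ρ ^ 2)))
        = Real.exp (-(x ^ 2) / 2) * Real.exp (-((y - ρ * x) ^ 2) / (2 * s ^ 2)) := by
      rw [← Real.exp_add]
      congr 1
      rw [hs2]
      have h1 := (gcs_one_sub_sq_pos hρ).ne'
      field_simp
      ring
    unfold binormDensity
    rw [he]
    ring
  simp_rw [hpt]
  rw [integral_const_mul, gcs_integral_Iic_gauss b (ρ * x) s hs]
  have hmul : Real.sqrt (2 * Real.pi) * Real.sqrt (2 * Real.pi) = 2 * Real.pi :=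
    Real.mul_self_sqrt (by positivity)
  have h2 : Real.sqrt (2 * Real.pi) ≠ 0 := by positivity
  have h2πs : (Real.sqrt (2 * Real.pi))⁻¹ * (Real.sqrt (2 * Real.pi))⁻¹ * s⁻¹
      = (2 * Real.pi * s)⁻¹ := by
    rw [← mul_inv, ← mul_inv, hmul]
  unfold stdPhi
  rw [← h2πs]
  field_simp

lemma gcs_Phi2_eq {ρ : ℝ} (hρ : ρ ∈ Ioo (-1:ℝ) 1) (a b : ℝ) :
    Phi2 a b ρ = ∫ x in Iic a,
      stdPhi x * stdNormCdf ((b - ρ * x) / Real.sqrt (1 - ρ ^ 2)) := by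
  unfold Phi2
  exact setIntegral_congr_fun measurableSet_Iic fun x _ => gcs_binorm_inner hρ x b

lemma gcs_integrable_stdPhi_mul_cdf (w : ℝ → ℝ) (hw : Continuous w) :
    Integrable (fun x => stdPhi x * stdNormCdf (w x)) := by
  apply Integrable.mono gcs_integrable_stdPhi
  · exact (stdPhi_cont.mul (stdNormCdf_continuous.comp hw)).aestronglyMeasurable
  · filter_upwards with x
    rw [Real.norm_eq_abs, Real.norm_eq_abs, abs_of_pos (stdPhi_pos x),
      abs_of_nonneg (mul_nonneg (stdPhi_pos x).le (stdNormCdf_nonneg _))]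
    nlinarith [stdPhi_pos x, stdNormCdf_nonneg (w x), stdNormCdf_le_one (w x)]

/-! ### Continuity from below in the second argument -/

lemma gcs_tendsto_Phi2_b {ρ : ℝ} (hρ : ρ ∈ Ioo (-1:ℝ) 1) (a : ℝ) :
    Filter.Tendsto (fun n : ℕ => Phi2 a (-(1 / (n + 1))) ρ) Filter.atTop
      (nhds (Phi2 a 0 ρ)) := by
  set s := Real.sqrt (1 - ρ ^ 2) with hs_def
  have hs : 0 < s := gcs_sqrt_one_sub_sq_pos hρ
  simp_rw [gcs_Phi2_eq hρ a]
  apply tendsto_integral_of_dominated_convergence stdPhi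
  · intro n
    exact ((stdPhi_cont.mul (stdNormCdf_continuous.comp
      (by continuity))).aestronglyMeasurable).restrict
  · exact gcs_integrable_stdPhi.restrict
  · intro n
    filter_upwards with x
    rw [Real.norm_eq_abs, abs_of_nonneg (mul_nonneg (stdPhi_pos x).le (stdNormCdf_nonneg _))]
    nlinarith [stdPhi_pos x, stdNormCdf_nonneg ((-(1/((n:ℝ)+1)) - ρ*x)/s),
      stdNormCdf_le_one ((-(1/((n:ℝ)+1)) - ρ*x)/s)]
  · filter_upwards with x
    have hb : Filter.Tendsto (fun n : ℕ => -(1 / ((n:ℝ) + 1))) Filter.atTop (nhds 0) := by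
      rw [show (0:ℝ) = -0 by ring]
      exact (tendsto_one_div_add_atTop_nhds_zero_nat).neg
    have harg : Filter.Tendsto (fun n : ℕ => (-(1 / ((n:ℝ) + 1)) - ρ * x) / s)
        Filter.atTop (nhds ((0 - ρ * x) / s)) :=
      ((hb.sub_const (ρ * x)).div_const s)
    exact ((stdNormCdf_continuous.tendsto _).comp harg).const_mul (stdPhi x)

/-! ### The sub-distribution computation -/

lemma gcs_subdist {Ω : Type*} [MeasurableSpace Ω] (μ : Measure Ω) [IsProbabilityMeasure μ]
    (Y η : Ω → ℝ)
    (σ ρ : ℝ) (hρ : ρ ∈ Ioo (-1:ℝ) 1)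
    (hjoint : ∀ y z : ℝ, (μ {ω | Y ω ≤ y ∧ η ω ≤ z}).toReal = Phi2 (y / σ) z ρ)
    (y : ℝ) : (μ {ω | Y ω ≤ y ∧ η ω < 0}).toReal = Phi2 (y / σ) 0 ρ := by
  set A : ℕ → Set Ω := fun n => {ω | Y ω ≤ y ∧ η ω ≤ -(1 / (n + 1))} with hA
  have hmono : Monotone A := by
    intro n m hnm ω hω
    refine ⟨hω.1, hω.2.trans ?_⟩
    have : (1:ℝ) / (m + 1) ≤ 1 / (n + 1) := by
      apply one_div_le_one_div_of_le (by positivity)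
      have : (n : ℝ) ≤ m := Nat.cast_le.2 hnm
      linarith
    linarith
  have hUnion : ⋃ n, A n = {ω | Y ω ≤ y ∧ η ω < 0} := by
    ext ω
    simp only [mem_iUnion, hA, mem_setOf_eq]
    constructor
    · rintro ⟨n, h1, h2⟩
      have : (0:ℝ) < 1 / (n + 1) := by positivity
      exact ⟨h1, by linarith⟩
    · rintro ⟨h1, h2⟩
      obtain ⟨n, hn⟩ := exists_nat_one_div_lt (show (0:ℝ) < -η ω by linarith)
      exact ⟨n, h1, by linarith⟩
  have T1 : Filter.Tendsto (fun n => μ (A n)) Filter.atTop (nhds (μ (⋃ n, A n))) :=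
    tendsto_measure_iUnion_atTop hmono
  have T2 : Filter.Tendsto (fun n => (μ (A n)).toReal) Filter.atTop
      (nhds ((μ (⋃ n, A n)).toReal)) :=
    (ENNReal.tendsto_toReal (measure_ne_top μ _)).comp T1
  have T2' : Filter.Tendsto (fun n : ℕ => Phi2 (y / σ) (-(1 / (n + 1))) ρ) Filter.atTop
      (nhds ((μ (⋃ n, A n)).toReal)) := by
    apply T2.congr
    intro n
    exact hjoint y (-(1 / (n + 1)))
  have := tendsto_nhds_unique T2' (gcs_tendsto_Phi2_b hρ (y / σ))
  rw [hUnion] at this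
  linarith

/-! ### Injectivity in the correlation parameter -/

lemma gcs_phi2_inj {ρ0 ρ1 : ℝ} (hρ0 : ρ0 ∈ Ioo (-1:ℝ) 1) (hρ1 : ρ1 ∈ Ioo (-1:ℝ) 1)
    (H : ∀ a : ℝ, Phi2 a 0 ρ0 = Phi2 a 0 ρ1) : ρ0 = ρ1 := by
  set s0 := Real.sqrt (1 - ρ0 ^ 2) with hs0_def
  set s1 := Real.sqrt (1 - ρ1 ^ 2) with hs1_def
  have hs0 : 0 < s0 := gcs_sqrt_one_sub_sq_pos hρ0
  have hs1 : 0 < s1 := gcs_sqrt_one_sub_sq_pos hρ1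
  set g0 : ℝ → ℝ := fun x => stdPhi x * stdNormCdf ((0 - ρ0 * x) / s0) with hg0
  set g1 : ℝ → ℝ := fun x => stdPhi x * stdNormCdf ((0 - ρ1 * x) / s1) with hg1
  have hg0i : Integrable g0 := gcs_integrable_stdPhi_mul_cdf _ (by continuity)
  have hg1i : Integrable g1 := gcs_integrable_stdPhi_mul_cdf _ (by continuity)
  have hg0c : Continuous g0 := stdPhi_cont.mul (stdNormCdf_continuous.comp (by continuity))
  have hg1c : Continuous g1 := stdPhi_cont.mul (stdNormCdf_continuous.comp (by continuity))
  set h : ℝ → ℝ := fun x => g0 x - g1 x with hh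
  have hhi : Integrable h := hg0i.sub hg1i
  have hhc : Continuous h := hg0c.sub hg1c
  have hzero : ∀ a : ℝ, ∫ x in Iic a, h x = 0 := by
    intro a
    rw [hh]
    rw [integral_sub hg0i.integrableOn hg1i.integrableOn]
    have := H a
    rw [gcs_Phi2_eq hρ0, gcs_Phi2_eq hρ1] at this
    rw [← hs0_def, ← hs1_def] at this
    rw [← hg0, ← hg1] at this
    simp only [hg0, hg1] at this ⊢
    linarith
  have hint : ∀ b : ℝ, ∫ x in (0:ℝ)..b, h x = 0 := by
    intro b
    rw [← intervalIntegral.integral_Iic_sub_Iic hhi.integrableOn hhi.integrableOn,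
      hzero, hzero, sub_zero]
  have hconst : (fun b : ℝ => ∫ x in (0:ℝ)..b, h x) = fun _ => (0:ℝ) := funext hint
  have hkey : ∀ c : ℝ, h c = 0 := by
    intro c
    have hd : HasDerivAt (fun b : ℝ => ∫ x in (0:ℝ)..b, h x) (h c) c :=
      intervalIntegral.integral_hasDerivAt_right hhi.intervalIntegrable
        (hhc.stronglyMeasurableAtFilter _ _) hhc.continuousAt
    rw [hconst] at hd
    exact hd.unique (hasDerivAt_const c 0)
  have h1 := hkey 1
  simp only [hh, hg0, hg1] at h1
  have hphi := (stdPhi_pos 1).ne'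
  have heq : stdNormCdf ((0 - ρ0 * 1) / s0) = stdNormCdf ((0 - ρ1 * 1) / s1) :=
    mul_left_cancel₀ hphi (sub_eq_zero.1 h1)
  have harg : (0 - ρ0 * 1) / s0 = (0 - ρ1 * 1) / s1 := stdNormCdf_strictMono.injective heq
  have hratio : ρ0 * s1 = ρ1 * s0 := by
    field_simp at harg
    linarith
  have hsq0 : s0 ^ 2 = 1 - ρ0 ^ 2 := Real.sq_sqrt (gcs_one_sub_sq_pos hρ0).le
  have hsq1 : s1 ^ 2 = 1 - ρ1 ^ 2 := Real.sq_sqrt (gcs_one_sub_sq_pos hρ1).le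
  have h2 : (ρ0 * s1) ^ 2 = (ρ1 * s0) ^ 2 := by rw [hratio]
  have h2' : ρ0 ^ 2 * s1 ^ 2 = ρ1 ^ 2 * s0 ^ 2 := by ring_nf at h2 ⊢; linarith
  have hsqeq : ρ0 ^ 2 = ρ1 ^ 2 := by nlinarith [h2', hsq0, hsq1]
  have hseq : s0 = s1 := by rw [hs0_def, hs1_def, hsqeq]
  rw [hseq] at hratio
  exact mul_right_cancel₀ hs1.ne' hratio

/-- in the bivariate Gaussian selection model with
`(Y_{t0}, η)` bivariate normal, `Y_{t0} ~ N(0, σ_t²)`, `η ~ N(0,1)`,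
`Corr(Y_{t0}, η) = ρ_t`, and `D = 1{η ≥ 0}` (so `P(D=0) = 1/2`):
the joint subdistribution is `P(Y_{t0} ≤ y, D=0) = Φ₂(y/σ_t, 0; ρ_t)`, the horizontal
subcopula is `C_{Y_{t0},D}(u, 1/2) = Φ₂(Φ⁻¹(u), 0; ρ_t)` (evaluated at
`u = F_{Y_{t0}}(σ_t Φ⁻¹(u))`), and copula stability holds iff `ρ₀ = ρ₁`. -/
theorem gaussian_copula_stability_iff_corr
    {Ω : Type*} [MeasurableSpace Ω] (μ : Measure Ω) [IsProbabilityMeasure μ]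
    (Y00 Y10 η : Ω → ℝ)
    (hY00 : Measurable Y00) (hY10 : Measurable Y10) (hη : Measurable η)
    (σ0 σ1 ρ0 ρ1 : ℝ) (hσ0 : 0 < σ0) (hσ1 : 0 < σ1)
    (hρ0 : ρ0 ∈ Ioo (-1:ℝ) 1) (hρ1 : ρ1 ∈ Ioo (-1:ℝ) 1)
    (hjoint0 : ∀ y z : ℝ,
      (μ {ω | Y00 ω ≤ y ∧ η ω ≤ z}).toReal = Phi2 (y / σ0) z ρ0)
    (hjoint1 : ∀ y z : ℝ,
      (μ {ω | Y10 ω ≤ y ∧ η ω ≤ z}).toReal = Phi2 (y / σ1) z ρ1)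
    (D : Ω → ℝ) (hD : ∀ ω, D ω = if 0 ≤ η ω then 1 else 0) :
    (∀ y : ℝ, (μ {ω | Y00 ω ≤ y ∧ D ω = 0}).toReal = Phi2 (y / σ0) 0 ρ0) ∧
    (∀ y : ℝ, (μ {ω | Y10 ω ≤ y ∧ D ω = 0}).toReal = Phi2 (y / σ1) 0 ρ1) ∧
    (∀ u ∈ Ioo (0:ℝ) 1,
      (μ {ω | Y00 ω ≤ σ0 * stdNormQuantile u ∧ D ω = 0}).toReal
        = Phi2 (stdNormQuantile u) 0 ρ0) ∧
    (∀ u ∈ Ioo (0:ℝ) 1,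
      (μ {ω | Y10 ω ≤ σ1 * stdNormQuantile u ∧ D ω = 0}).toReal
        = Phi2 (stdNormQuantile u) 0 ρ1) ∧
    ((∀ u ∈ Ioo (0:ℝ) 1,
        Phi2 (stdNormQuantile u) 0 ρ0 = Phi2 (stdNormQuantile u) 0 ρ1)
      ↔ ρ0 = ρ1) := by
  have hDiff : ∀ ω, (D ω = 0 ↔ η ω < 0) := by
    intro ω
    rw [hD ω]
    split_ifs with h
    · simp only [one_ne_zero, false_iff, not_lt]; exact h
    · simp only [true_iff]; exact lt_of_not_ge h
  have part1 : ∀ y : ℝ, (μ {ω | Y00 ω ≤ y ∧ D ω = 0}).toReal = Phi2 (y / σ0) 0 ρ0 := by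
    intro y
    rw [show {ω | Y00 ω ≤ y ∧ D ω = 0} = {ω | Y00 ω ≤ y ∧ η ω < 0} from by
      ext ω; simp [hDiff ω]]
    exact gcs_subdist μ Y00 η σ0 ρ0 hρ0 hjoint0 y
  have part2 : ∀ y : ℝ, (μ {ω | Y10 ω ≤ y ∧ D ω = 0}).toReal = Phi2 (y / σ1) 0 ρ1 := by
    intro y
    rw [show {ω | Y10 ω ≤ y ∧ D ω = 0} = {ω | Y10 ω ≤ y ∧ η ω < 0} from by
      ext ω; simp [hDiff ω]]
    exact gcs_subdist μ Y10 η σ1 ρ1 hρ1 hjoint1 y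
  refine ⟨part1, part2, ?_, ?_, ?_⟩
  · intro u _
    have := part1 (σ0 * stdNormQuantile u)
    rwa [mul_div_cancel_left₀ _ hσ0.ne'] at this
  · intro u _
    have := part2 (σ1 * stdNormQuantile u)
    rwa [mul_div_cancel_left₀ _ hσ1.ne'] at this
  · constructor
    · intro Hu
      apply gcs_phi2_inj hρ0 hρ1
      intro a
      have hu : stdNormCdf a ∈ Ioo (0:ℝ) 1 := ⟨stdNormCdf_pos a, stdNormCdf_lt_one a⟩
      have := Hu _ hu
      rwa [stdNormQuantile_cdf] at this
    · intro h u _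
      rw [h]
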